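/- arXiv:2601.18128 — 3 statements merged into one kernel-verified Lean document; each statement's English description precedes it below -/
import Mathlib

section
/- Let Ω be a probability space, K, G natural numbers, z : Ω → (Fin K → ℝ) a random vector, f : Fin G → ((Fin K → ℝ) → ℝ) measurable functions, and ε : Fin G → Ω → ℝ noise variables; define features x_l := f_l ∘ z + ε_l and assume each x_l and each f_l ∘ z is square-integrable. Fix indices j ≠ j' and a real constant c ≠ 0 with f_j = c · f_{j'} (pointwise), and suppose that for every l ∉ {j, j'}, ε_j is independent of x_l and ε_{j'} is independent of x_l. Then for every l ∉ {j, j'}, Cov(x_j, x_l) = c · Cov(x_{j'}, x_l); i.e., the off-diagonal rows of the covariance matrix of the features indexed by j and j' are parallel. -/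
open MeasureTheory ProbabilityTheory

/-- The covariance of two real-valued random variables:
`Cov(U, V) = E[(U − E[U]) * (V − E[V])]`. -/
noncomputable def cov {Ω : Type*} [MeasurableSpace Ω] (P : Measure Ω) (U V : Ω → ℝ) : ℝ :=
  ∫ ω, (U ω - ∫ ω', U ω' ∂P) * (V ω - ∫ ω', V ω' ∂P) ∂P

section aux
set_option linter.unusedSectionVars false
variable {Ω : Type*} [MeasurableSpace Ω] (P : Measure Ω) [IsProbabilityMeasure P]

private lemma integrable_mul_of_L2 {U V : Ω → ℝ} (hU : MemLp U 2 P) (hV : MemLp V 2 P) :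
    Integrable (fun ω => U ω * V ω) P := by
  have : MemLp (U • V) 1 P := hV.smul hU
  exact memLp_one_iff_integrable.mp this

private lemma int_of_L2 {U : Ω → ℝ} (hU : MemLp U 2 P) : Integrable U P :=
  memLp_one_iff_integrable.mp (hU.mono_exponent (by norm_num))

private lemma centered_L2 {U : Ω → ℝ} (hU : MemLp U 2 P) (m : ℝ) :
    MemLp (fun ω => U ω - m) 2 P := hU.sub (memLp_const m)

private lemma integral_centered {U : Ω → ℝ} (hU : Integrable U P) :
    ∫ ω, (U ω - ∫ ω', U ω' ∂P) ∂P = 0 := by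
  rw [integral_sub hU (integrable_const _)]
  simp

private lemma cov_indep_zero {U V : Ω → ℝ} (hU : MemLp U 2 P) (hV : MemLp V 2 P)
    (h : IndepFun U V P) : cov P U V = 0 := by
  set mU := ∫ ω', U ω' ∂P
  set mV := ∫ ω', V ω' ∂P
  have h' : IndepFun (fun ω => U ω - mU) (fun ω => V ω - mV) P :=
    h.comp (measurable_id.sub_const mU) (measurable_id.sub_const mV)
  have hUc : Integrable (fun ω => U ω - mU) P := int_of_L2 P (centered_L2 P hU mU)
  have hVc : Integrable (fun ω => V ω - mV) P := int_of_L2 P (centered_L2 P hV mV)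
  have key := h'.integral_mul_eq_mul_integral hUc.aestronglyMeasurable hVc.aestronglyMeasurable
  have : cov P U V = integral P ((fun ω => U ω - mU) * fun ω => V ω - mV) := rfl
  rw [this, key]
  have hz : ∫ ω, (U ω - mU) ∂P = 0 := integral_centered P (int_of_L2 P hU)
  rw [hz, zero_mul]

private lemma cov_add_left {U V W : Ω → ℝ} (hU : MemLp U 2 P) (hV : MemLp V 2 P)
    (hW : MemLp W 2 P) :
    cov P (fun ω => U ω + V ω) W = cov P U W + cov P V W := by
  set mU := ∫ ω', U ω' ∂P
  set mV := ∫ ω', V ω' ∂P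
  set mW := ∫ ω', W ω' ∂P
  have hm : ∫ ω', (U ω' + V ω') ∂P = mU + mV :=
    integral_add (int_of_L2 P hU) (int_of_L2 P hV)
  have h1 : Integrable (fun ω => (U ω - mU) * (W ω - mW)) P :=
    integrable_mul_of_L2 P (centered_L2 P hU mU) (centered_L2 P hW mW)
  have h2 : Integrable (fun ω => (V ω - mV) * (W ω - mW)) P :=
    integrable_mul_of_L2 P (centered_L2 P hV mV) (centered_L2 P hW mW)
  unfold cov
  rw [hm]
  calc ∫ ω, (U ω + V ω - (mU + mV)) * (W ω - mW) ∂P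
      = ∫ ω, ((U ω - mU) * (W ω - mW) + (V ω - mV) * (W ω - mW)) ∂P := by
        congr 1; funext ω; ring
    _ = _ := integral_add h1 h2

private lemma cov_smul_left {U W : Ω → ℝ} (c : ℝ) :
    cov P (fun ω => c * U ω) W = c * cov P U W := by
  have h : ∫ a, c * U a ∂P = c * ∫ a, U a ∂P := integral_const_mul c U
  unfold cov
  calc ∫ ω, ((fun ω => c * U ω) ω - ∫ a, c * U a ∂P) * (W ω - ∫ ω', W ω' ∂P) ∂P
      = ∫ ω, c * ((U ω - ∫ ω', U ω' ∂P) * (W ω - ∫ ω', W ω' ∂P)) ∂P := by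
        rw [h]; congr 1; funext ω; ring
    _ = _ := integral_const_mul c _

end aux

/-- Forward direction of the paper's Lemma 1: if `j` and `j'` are anchor features for the same
factor (i.e. `f j = c • f j'` with `c ≠ 0`), with noises independent of the other features,
then the corresponding off-diagonal rows of the covariance matrix are parallel:
`Cov(x_j, x_l) = c * Cov(x_{j'}, x_l)` for all `l ∉ {j, j'}`. -/
theorem anchor_rows_parallel {Ω : Type*} [MeasurableSpace Ω] (P : Measure Ω)
    [IsProbabilityMeasure P] (K G : ℕ)
    (z : Ω → (Fin K → ℝ)) (f : Fin G → ((Fin K → ℝ) → ℝ))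
    (hf : ∀ l, Measurable (f l))
    (ε : Fin G → Ω → ℝ)
    (x : Fin G → Ω → ℝ) (hx : ∀ l, x l = fun ω => f l (z ω) + ε l ω)
    (hxL2 : ∀ l, MemLp (x l) 2 P)
    (hfzL2 : ∀ l, MemLp (fun ω => f l (z ω)) 2 P)
    (j j' : Fin G) (hjj' : j ≠ j') (c : ℝ) (hc : c ≠ 0)
    (hanchor : ∀ u : Fin K → ℝ, f j u = c * f j' u)
    (hindep : ∀ l, l ≠ j → l ≠ j' → IndepFun (ε j) (x l) P ∧ IndepFun (ε j') (x l) P) :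
    ∀ l, l ≠ j → l ≠ j' → cov P (x j) (x l) = c * cov P (x j') (x l) := by
  intro l hlj hlj'
  obtain ⟨hind1, hind2⟩ := hindep l hlj hlj'
  -- ε is L2
  have hεL2 : ∀ m, MemLp (ε m) 2 P := by
    intro m
    have : ε m = fun ω => x m ω - f m (z ω) := by
      funext ω; rw [hx m]; ring
    rw [this]
    exact (hxL2 m).sub (hfzL2 m)
  set g : Ω → ℝ := fun ω => f j' (z ω) with hg
  have hxj : x j = fun ω => c * g ω + ε j ω := by
    funext ω; rw [hx j]; simp only []; rw [hanchor]
  have hxj' : x j' = fun ω => g ω + ε j' ω := hx j'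
  have hcgL2 : MemLp (fun ω => c * g ω) 2 P := (hfzL2 j').const_mul c
  have h1 : cov P (x j) (x l) = c * cov P g (x l) + cov P (ε j) (x l) := by
    rw [hxj, cov_add_left P hcgL2 (hεL2 j) (hxL2 l), cov_smul_left]
  have h2 : cov P (x j') (x l) = cov P g (x l) + cov P (ε j') (x l) := by
    rw [hxj', cov_add_left P (hfzL2 j') (hεL2 j') (hxL2 l)]
  rw [h1, h2, cov_indep_zero P (hεL2 j) (hxL2 l) hind1,
    cov_indep_zero P (hεL2 j') (hxL2 l) hind2]
  ring
end

section
/- Let S, ε, ε' be square-integrable real random variables on a probability space with ε independent of S, ε' independent of S, and ε independent of ε', and let c ≠ 0 be a real number. Define the anchor features x := S + ε and x' := c·S + ε'. Then the noise variance of the first anchor is identified as Var(ε) = Var(x) − Cov(x, x')/c. -/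
open MeasureTheory ProbabilityTheory

lemma centered_mul_zero {Ω : Type*} [MeasurableSpace Ω] (P : Measure Ω)
    [IsProbabilityMeasure P] {X Y : Ω → ℝ} (hX : MemLp X 2 P) (hY : MemLp Y 2 P)
    (h : IndepFun X Y P) :
    ∫ ω, (X ω - ∫ ω', X ω' ∂P) * (Y ω - ∫ ω', Y ω' ∂P) ∂P = 0 := by
  have hXi : Integrable X P := hX.integrable one_le_two
  have hYi : Integrable Y P := hY.integrable one_le_two
  have hXY : Integrable (X * Y) P := h.integrable_mul hXi hYi
  set a := ∫ ω', X ω' ∂P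
  set b := ∫ ω', Y ω' ∂P
  have key : (∫ ω, X ω * Y ω ∂P) = a * b := h.integral_fun_mul_eq_mul_integral hXi.1 hYi.1
  have hXYl : Integrable (fun ω => X ω * Y ω) P := hXY
  have expand : ∀ ω, (X ω - a) * (Y ω - b)
      = X ω * Y ω - a * Y ω - b * X ω + a * b := by intro ω; ring
  rw [integral_congr_ae (Filter.Eventually.of_forall expand)]
  have i1 : Integrable (fun ω => X ω * Y ω - a * Y ω) P := hXYl.sub (hYi.const_mul a)
  have i2 : Integrable (fun ω => X ω * Y ω - a * Y ω - b * X ω) P := i1.sub (hXi.const_mul b)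
  rw [integral_add i2 (integrable_const _), integral_sub i1 (hXi.const_mul b),
    integral_sub hXYl (hYi.const_mul a), integral_const_mul, integral_const_mul,
    integral_const, key]
  simp
  ring

/-- The paper's Lemma 2: for anchor features `x = S + ε` and `x' = c·S + ε'` with mutually
independent square-integrable noises independent of the signal and `c ≠ 0`, the noise variance
of the first anchor is identified as `Var(ε) = Var(x) − Cov(x, x')/c`. -/
theorem anchor_noise_variance_identified {Ω : Type*} [MeasurableSpace Ω] (P : Measure Ω)
    [IsProbabilityMeasure P] (S ε ε' : Ω → ℝ)
    (hS : MemLp S 2 P) (hε : MemLp ε 2 P) (hε' : MemLp ε' 2 P)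
    (hεS : IndepFun ε S P) (hε'S : IndepFun ε' S P) (hεε' : IndepFun ε ε' P)
    (c : ℝ) (hc : c ≠ 0) :
    variance ε P = variance (S + ε) P - cov P (S + ε) (c • S + ε') / c := by
  have hSi : Integrable S P := hS.integrable one_le_two
  have hεi : Integrable ε P := hε.integrable one_le_two
  have hε'i : Integrable ε' P := hε'.integrable one_le_two
  set a := ∫ ω', S ω' ∂P with ha
  set b := ∫ ω', ε ω' ∂P with hb
  set b' := ∫ ω', ε' ω' ∂P with hb'
  -- compute the covariance
  have hsum : (∫ ω', (S + ε) ω' ∂P) = a + b := by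
    simpa using integral_add hSi hεi
  have hsum' : (∫ ω', (c • S + ε') ω' ∂P) = c * a + b' := by
    simp only [Pi.add_apply, Pi.smul_apply, smul_eq_mul]
    rw [integral_add (hSi.const_mul c) hε'i, integral_const_mul]
  have hSε' : (∫ ω, (S ω - a) * (ε' ω - b') ∂P) = 0 :=
    centered_mul_zero P hS hε' hε'S.symm
  have hεS0 : (∫ ω, (ε ω - b) * (S ω - a) ∂P) = 0 :=
    centered_mul_zero P hε hS hεS
  have hεε'0 : (∫ ω, (ε ω - b) * (ε' ω - b') ∂P) = 0 :=
    centered_mul_zero P hε hε' hεε'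
  have hvarS : variance S P = ∫ ω, (S ω - a) ^ 2 ∂P := variance_eq_integral hS.aemeasurable
  -- integrability of centered products
  have hSc : MemLp (fun ω => S ω - a) 2 P := hS.sub (memLp_const a)
  have hεc : MemLp (fun ω => ε ω - b) 2 P := hε.sub (memLp_const b)
  have hε'c : MemLp (fun ω => ε' ω - b') 2 P := hε'.sub (memLp_const b')
  have h2 : (1 : ENNReal) / 1 = 1 / 2 + 1 / 2 := by
    rw [div_one, ENNReal.add_halves]
  have hmul : ∀ {f g : Ω → ℝ}, MemLp f 2 P → MemLp g 2 P →
      Integrable (fun ω => f ω * g ω) P := by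
    intro f g hf hg
    have := (hf.smul hg : MemLp (g • f) 1 P)
    have : MemLp (fun ω => g ω * f ω) 1 P := this
    exact (this.integrable le_rfl).congr (by filter_upwards with ω; ring_nf)
  have hSS : Integrable (fun ω => (S ω - a) * (S ω - a)) P := hmul hSc hSc
  have hSh : Integrable (fun ω => (S ω - a) * (ε' ω - b')) P := hmul hSc hε'c
  have hgf : Integrable (fun ω => (ε ω - b) * (S ω - a)) P := hmul hεc hSc
  have hgh : Integrable (fun ω => (ε ω - b) * (ε' ω - b')) P := hmul hεc hε'c
  have hcov : cov P (S + ε) (c • S + ε') = c * variance S P := by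
    unfold cov
    rw [hsum, hsum']
    have expand : ∀ ω, ((S + ε) ω - (a + b)) * ((c • S + ε') ω - (c * a + b'))
        = c * ((S ω - a) * (S ω - a)) + (S ω - a) * (ε' ω - b')
          + c * ((ε ω - b) * (S ω - a)) + (ε ω - b) * (ε' ω - b') := by
      intro ω; simp only [Pi.add_apply, Pi.smul_apply, smul_eq_mul]; ring
    rw [integral_congr_ae (Filter.Eventually.of_forall expand)]
    have j0 : Integrable (fun ω => c * ((S ω - a) * (S ω - a))) P := hSS.const_mul c
    have j1 : Integrable (fun ω => c * ((S ω - a) * (S ω - a)) + (S ω - a) * (ε' ω - b')) P :=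
      j0.add hSh
    have j2 : Integrable (fun ω => c * ((S ω - a) * (S ω - a)) + (S ω - a) * (ε' ω - b')
        + c * ((ε ω - b) * (S ω - a))) P := j1.add (hgf.const_mul c)
    rw [integral_add j2 hgh, integral_add j1 (hgf.const_mul c), integral_add j0 hSh,
      integral_const_mul, integral_const_mul]
    rw [hSε', hεS0, hεε'0, hvarS]
    simp [sq]
  have hvadd : variance (S + ε) P = variance S P + variance ε P :=
    (hεS.symm).variance_add hS hε
  rw [hvadd, hcov]
  field_simp
  ring
end

section
/- Let G, K₁, K₂ be natural numbers, A : Matrix (Fin G) (Fin K₁) ℝ and B : Matrix (Fin G) (Fin K₂) ℝ. Suppose that for every column index k : Fin K₁ there exists a row index r k : Fin G such that A (r k) k ≠ 0, A (r k) k' = 0 for every k' ≠ k, and B (r k) k'' = 0 for every k'' : Fin K₂. Then the column spaces of A and B intersect trivially: if w : Fin G → ℝ satisfies w = A.mulVec c for some c : Fin K₁ → ℝ and also w = B.mulVec d for some d : Fin K₂ → ℝ, then w = 0. -/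
open Matrix

/-- If every column of `A` has an anchor row (a row where only that column of `A` is nonzero
and every entry of `B` is zero), then the column spaces of `A` and `B` intersect trivially. -/
theorem anchor_column_spaces_trivial_intersection (G K₁ K₂ : ℕ)
    (A : Matrix (Fin G) (Fin K₁) ℝ) (B : Matrix (Fin G) (Fin K₂) ℝ)
    (hanchor : ∀ k : Fin K₁, ∃ r : Fin G,
      A r k ≠ 0 ∧ (∀ k' : Fin K₁, k' ≠ k → A r k' = 0) ∧ (∀ k'' : Fin K₂, B r k'' = 0))
    (w : Fin G → ℝ)
    (hA : ∃ c : Fin K₁ → ℝ, w = A.mulVec c)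
    (hB : ∃ d : Fin K₂ → ℝ, w = B.mulVec d) :
    w = 0 := by
  obtain ⟨c, hc⟩ := hA
  obtain ⟨d, hd⟩ := hB
  have hczero : ∀ k, c k = 0 := by
    intro k
    obtain ⟨r, hr1, hr2, hr3⟩ := hanchor k
    have hwr0 : w r = 0 := by
      rw [hd, mulVec]
      simp [dotProduct, hr3]
    have hwr : w r = A r k * c k := by
      rw [hc, mulVec, dotProduct]
      rw [Finset.sum_eq_single k]
      · intro b _ hb; rw [hr2 b hb]; ring
      · intro h; exact absurd (Finset.mem_univ k) h
    rw [hwr0] at hwr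
    rcases mul_eq_zero.mp hwr.symm with h | h
    · exact absurd h hr1
    · exact h
  rw [hc]
  funext i
  simp [mulVec, dotProduct, hczero]
end
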